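/- For any three distinct points v1, v2, v3 in a real inner product space, the squared Menger curvature c_M^2(v1,v2,v3) = 4·sin^2(angle at v1)/‖v2-v3‖^2 and the quantity c_1^2(v1,v2,v3) = (sin^2(angle at v1) + sin^2(angle at v2) + sin^2(angle at v3))/(3·diam^2(v1,v2,v3)) satisfy (1/12)·c_M^2(v1,v2,v3) ≤ c_1^2(v1,v2,v3) ≤ (1/4)·c_M^2(v1,v2,v3). -/

import Mathlib

open InnerProductGeometry

local notation "⟪" x ", " y "⟫" => @inner ℝ _ _ x y

lemma sinsq_aux {H : Type*} [NormedAddCommGroup H] [InnerProductSpace ℝ H]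
    (x y : H) (hx : x ≠ 0) (hy : y ≠ 0) :
    Real.sin (angle x y) ^ 2 =
      (⟪x, x⟫ * ⟪y, y⟫ - ⟪x, y⟫ * ⟪x, y⟫) / (‖x‖ ^ 2 * ‖y‖ ^ 2) := by
  have h := sin_angle_mul_norm_mul_norm x y
  have hnn : 0 ≤ ⟪x, x⟫ * ⟪y, y⟫ - ⟪x, y⟫ * ⟪x, y⟫ :=
    sub_nonneg.2 (real_inner_mul_inner_self_le x y)
  have h2 : Real.sin (angle x y) ^ 2 * (‖x‖ ^ 2 * ‖y‖ ^ 2) =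
      ⟪x, x⟫ * ⟪y, y⟫ - ⟪x, y⟫ * ⟪x, y⟫ := by
    have := congrArg (· ^ 2) h
    simp only [mul_pow, Real.sq_sqrt hnn] at this
    linarith [this]
  have hx' : (0:ℝ) < ‖x‖ := norm_pos_iff.2 hx
  have hy' : (0:ℝ) < ‖y‖ := norm_pos_iff.2 hy
  rw [eq_div_iff (by positivity)]
  exact h2

lemma key (A B C D K : ℝ) (hA : 0 < A) (hB : 0 < B) (hC : 0 < C) (hK : 0 ≤ K)
    (hAD : A ≤ D) (hBD : B ≤ D) (hCD : C ≤ D) (hD : D ≤ A + B + C) :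
    (1 / 12) * (4 * (K / (C * B)) / A) ≤
      (K / (C * B) + K / (C * A) + K / (B * A)) / (3 * D) ∧
    (K / (C * B) + K / (C * A) + K / (B * A)) / (3 * D) ≤
      (1 / 4) * (4 * (K / (C * B)) / A) := by
  have hD0 : 0 < D := lt_of_lt_of_le hA hAD
  have e1 : K / (C * B) + K / (C * A) + K / (B * A) = K * (A + B + C) / (A * B * C) := by
    field_simp
  have e2 : (1 / 12 : ℝ) * (4 * (K / (C * B)) / A) = K / (3 * (A * B * C)) := by
    field_simp; ring
  have e3 : (1 / 4 : ℝ) * (4 * (K / (C * B)) / A) = K / (A * B * C) := by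
    rw [show (1/4:ℝ) * (4 * (K / (C * B)) / A) = K / (C * B) / A by ring, div_div,
      div_eq_div_iff (by positivity) (by positivity)]
    ring
  rw [e1, e2, e3, div_div]
  constructor
  · rw [div_le_div_iff₀ (by positivity) (by positivity)]
    have h1 : K * D ≤ K * (A + B + C) := mul_le_mul_of_nonneg_left hD hK
    nlinarith [mul_le_mul_of_nonneg_right h1 (by positivity : (0:ℝ) ≤ A * B * C)]
  · rw [div_le_div_iff₀ (by positivity) (by positivity)]
    have h2 : K * (A + B + C) ≤ K * (3 * D) := by nlinarith
    nlinarith [mul_le_mul_of_nonneg_right h2 (by positivity : (0:ℝ) ≤ A * B * C)]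

theorem stmt_0 {H : Type*} [NormedAddCommGroup H] [InnerProductSpace ℝ H]
    (v1 v2 v3 : H) (h12 : v1 ≠ v2) (h13 : v1 ≠ v3) (h23 : v2 ≠ v3) :
    (1 / 12) * (4 * Real.sin (angle (v2 - v1) (v3 - v1)) ^ 2 / ‖v2 - v3‖ ^ 2) ≤
      (Real.sin (angle (v2 - v1) (v3 - v1)) ^ 2 + Real.sin (angle (v1 - v2) (v3 - v2)) ^ 2 +
          Real.sin (angle (v1 - v3) (v2 - v3)) ^ 2) /
        (3 * max ‖v1 - v2‖ (max ‖v1 - v3‖ ‖v2 - v3‖) ^ 2) ∧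
    (Real.sin (angle (v2 - v1) (v3 - v1)) ^ 2 + Real.sin (angle (v1 - v2) (v3 - v2)) ^ 2 +
          Real.sin (angle (v1 - v3) (v2 - v3)) ^ 2) /
        (3 * max ‖v1 - v2‖ (max ‖v1 - v3‖ ‖v2 - v3‖) ^ 2) ≤
      (1 / 4) * (4 * Real.sin (angle (v2 - v1) (v3 - v1)) ^ 2 / ‖v2 - v3‖ ^ 2) := by
  have h21 : v2 - v1 ≠ 0 := sub_ne_zero.2 h12.symm
  have h31 : v3 - v1 ≠ 0 := sub_ne_zero.2 h13.symm
  have h12' : v1 - v2 ≠ 0 := sub_ne_zero.2 h12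
  have h32 : v3 - v2 ≠ 0 := sub_ne_zero.2 h23.symm
  have h13' : v1 - v3 ≠ 0 := sub_ne_zero.2 h13
  have h23' : v2 - v3 ≠ 0 := sub_ne_zero.2 h23
  have ha : (0:ℝ) < ‖v2 - v3‖ := norm_pos_iff.2 h23'
  have hb : (0:ℝ) < ‖v1 - v3‖ := norm_pos_iff.2 h13'
  have hc : (0:ℝ) < ‖v1 - v2‖ := norm_pos_iff.2 h12'
  set K : ℝ := ⟪v1 - v2, v1 - v2⟫ * ⟪v1 - v3, v1 - v3⟫ - ⟪v1 - v2, v1 - v3⟫ * ⟪v1 - v2, v1 - v3⟫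
    with hKdef
  have hK : 0 ≤ K := sub_nonneg.2 (real_inner_mul_inner_self_le _ _)
  have hs1 : Real.sin (angle (v2 - v1) (v3 - v1)) ^ 2 = K / (‖v1 - v2‖ ^ 2 * ‖v1 - v3‖ ^ 2) := by
    rw [sinsq_aux _ _ h21 h31, norm_sub_rev v2 v1, norm_sub_rev v3 v1]
    congr 1
    rw [hKdef]
    simp only [inner_sub_left, inner_sub_right, real_inner_comm v2 v1, real_inner_comm v3 v1,
      real_inner_comm v3 v2]
    ring
  have hs2 : Real.sin (angle (v1 - v2) (v3 - v2)) ^ 2 = K / (‖v1 - v2‖ ^ 2 * ‖v2 - v3‖ ^ 2) := by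
    rw [sinsq_aux _ _ h12' h32, norm_sub_rev v3 v2]
    congr 1
    rw [hKdef]
    simp only [inner_sub_left, inner_sub_right, real_inner_comm v2 v1, real_inner_comm v3 v1,
      real_inner_comm v3 v2]
    ring
  have hs3 : Real.sin (angle (v1 - v3) (v2 - v3)) ^ 2 = K / (‖v1 - v3‖ ^ 2 * ‖v2 - v3‖ ^ 2) := by
    rw [sinsq_aux _ _ h13' h23']
    congr 1
    rw [hKdef]
    simp only [inner_sub_left, inner_sub_right, real_inner_comm v2 v1, real_inner_comm v3 v1,
      real_inner_comm v3 v2]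
    ring
  set d : ℝ := max ‖v1 - v2‖ (max ‖v1 - v3‖ ‖v2 - v3‖) with hd
  have hcd : ‖v1 - v2‖ ≤ d := le_max_left _ _
  have hbd : ‖v1 - v3‖ ≤ d := le_trans (le_max_left _ _) (le_max_right _ _)
  have had : ‖v2 - v3‖ ≤ d := le_trans (le_max_right _ _) (le_max_right _ _)
  have hd0 : 0 < d := lt_of_lt_of_le hc hcd
  have hA : ‖v2 - v3‖ ^ 2 ≤ d ^ 2 := pow_le_pow_left₀ ha.le had 2
  have hB : ‖v1 - v3‖ ^ 2 ≤ d ^ 2 := pow_le_pow_left₀ hb.le hbd 2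
  have hC : ‖v1 - v2‖ ^ 2 ≤ d ^ 2 := pow_le_pow_left₀ hc.le hcd 2
  have hDsum : d ^ 2 ≤ ‖v2 - v3‖ ^ 2 + ‖v1 - v3‖ ^ 2 + ‖v1 - v2‖ ^ 2 := by
    rcases max_cases ‖v1 - v2‖ (max ‖v1 - v3‖ ‖v2 - v3‖) with ⟨h, _⟩ | ⟨h, _⟩
    · rw [hd, h]; nlinarith
    · rcases max_cases ‖v1 - v3‖ ‖v2 - v3‖ with ⟨h', _⟩ | ⟨h', _⟩ <;>
        rw [hd, h, h'] <;> nlinarith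
  rw [hs1, hs2, hs3]
  exact key (‖v2 - v3‖ ^ 2) (‖v1 - v3‖ ^ 2) (‖v1 - v2‖ ^ 2) (d ^ 2) K
    (by positivity) (by positivity) (by positivity) hK hA hB hC (by linarith)
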